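/- For t ∈ (0,1) define α_t(u) = ( t(1−u)log(1−u) − (1−tu)log(1−tu) ) / (t(1−t)) for 0 ≤ u ≤ 1 (and +∞ otherwise). Then for t = 1/2 and all u ∈ [0,1], α_{1/2}(u) ≥ u²/2. -/

import Mathlib

open Real Set

lemma core_log_ineq {x : ℝ} (hx0 : 0 ≤ x) (hx1 : x < 1) :
    Real.log (1 - x) ≤ -x - x ^ 2 / 2 := by
  set f : ℝ → ℝ := fun t => -t - t ^ 2 / 2 - Real.log (1 - t) with hf
  have hderiv : ∀ t ∈ Set.Ico (0 : ℝ) 1, HasDerivAt f (t ^ 2 / (1 - t)) t := by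
    intro t ht
    have h1 : (0 : ℝ) < 1 - t := by linarith [ht.2]
    have hlog : HasDerivAt (fun s : ℝ => Real.log (1 - s)) ((1 - t)⁻¹ * (-1)) t :=
      (Real.hasDerivAt_log (ne_of_gt h1)).comp t ((hasDerivAt_id t).const_sub 1)
    have h2 : HasDerivAt f (-1 - (↑2 * t ^ 1 * 1) / 2 - (1 - t)⁻¹ * (-1)) t :=
      (((hasDerivAt_id t).neg).sub (((hasDerivAt_id t).pow 2).div_const 2)).sub hlog
    convert h2 using 1
    field_simp
    ring
  have hsub : Set.Icc (0 : ℝ) x ⊆ Set.Ico (0 : ℝ) 1 := fun t ht =>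
    ⟨ht.1, lt_of_le_of_lt ht.2 hx1⟩
  have hmono : MonotoneOn f (Set.Icc 0 x) := by
    apply monotoneOn_of_deriv_nonneg (convex_Icc 0 x)
    · intro t ht
      exact ((hderiv t (hsub ht)).continuousAt).continuousWithinAt
    · intro t ht
      rw [interior_Icc] at ht
      exact ((hderiv t (hsub (Set.Ioo_subset_Icc_self ht))).differentiableAt).differentiableWithinAt
    · intro t ht
      rw [interior_Icc] at ht
      have h1 : (0 : ℝ) < 1 - t := by linarith [lt_of_lt_of_le ht.2 (le_of_lt hx1)]
      rw [(hderiv t (hsub (Set.Ioo_subset_Icc_self ht))).deriv]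
      positivity
  have h0 : f 0 = 0 := by simp [hf]
  have hx : f 0 ≤ f x := hmono (Set.left_mem_Icc.mpr hx0) (Set.right_mem_Icc.mpr hx0) hx0
  rw [h0] at hx
  simp only [hf] at hx
  linarith

lemma ineq_A {u : ℝ} (hu0 : 0 ≤ u) (hu1 : u ≤ 1) :
    -u + u ^ 2 / 2 + u ^ 3 / 6 ≤ (1 - u) * Real.log (1 - u) := by
  rcases eq_or_lt_of_le hu1 with h | h
  · subst h  -- u = 1? careful direction
    norm_num
  · set g : ℝ → ℝ := fun t => (1 - t) * Real.log (1 - t) - (-t + t ^ 2 / 2 + t ^ 3 / 6) with hg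
    have hderiv : ∀ t ∈ Set.Ico (0 : ℝ) 1,
        HasDerivAt g (-Real.log (1 - t) - t - t ^ 2 / 2) t := by
      intro t ht
      have h1 : (0 : ℝ) < 1 - t := by linarith [ht.2]
      have hlog : HasDerivAt (fun s : ℝ => Real.log (1 - s)) ((1 - t)⁻¹ * (-1)) t :=
        (Real.hasDerivAt_log (ne_of_gt h1)).comp t ((hasDerivAt_id t).const_sub 1)
      have hprod : HasDerivAt (fun s : ℝ => (1 - s) * Real.log (1 - s))
          ((-1) * Real.log (1 - t) + (1 - t) * ((1 - t)⁻¹ * (-1))) t :=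
        ((hasDerivAt_id t).const_sub 1).mul hlog
      have hpoly : HasDerivAt (fun s : ℝ => -s + s ^ 2 / 2 + s ^ 3 / 6)
          (-1 + (↑2 * t ^ 1 * 1) / 2 + (↑3 * t ^ 2 * 1) / 6) t := by
        exact (((hasDerivAt_id t).neg).add (((hasDerivAt_id t).pow 2).div_const 2)).add
          (((hasDerivAt_id t).pow 3).div_const 6)
      have h2 : HasDerivAt g ((-1) * Real.log (1 - t) + (1 - t) * ((1 - t)⁻¹ * (-1)) -
          (-1 + (↑2 * t ^ 1 * 1) / 2 + (↑3 * t ^ 2 * 1) / 6)) t := hprod.sub hpoly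
      convert h2 using 1
      rw [mul_inv_cancel_left₀ h1.ne']
      ring
    have hmono : MonotoneOn g (Set.Icc 0 u) := by
      have hsub : Set.Icc (0 : ℝ) u ⊆ Set.Ico (0 : ℝ) 1 := fun t ht =>
        ⟨ht.1, lt_of_le_of_lt ht.2 h⟩
      apply monotoneOn_of_deriv_nonneg (convex_Icc 0 u)
      · intro t ht
        exact ((hderiv t (hsub ht)).continuousAt).continuousWithinAt
      · intro t ht
        rw [interior_Icc] at ht
        exact ((hderiv t (hsub (Set.Ioo_subset_Icc_self ht))).differentiableAt).differentiableWithinAt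
      · intro t ht
        rw [interior_Icc] at ht
        have ht' := hsub (Set.Ioo_subset_Icc_self ht)
        have := core_log_ineq ht'.1 ht'.2
        rw [(hderiv t (hsub (Set.Ioo_subset_Icc_self ht))).deriv]
        linarith
    have h0 : g 0 = 0 := by simp [hg]
    have hx : g 0 ≤ g u := hmono (Set.left_mem_Icc.mpr hu0) (Set.right_mem_Icc.mpr hu0) hu0
    rw [h0] at hx
    simp only [hg] at hx
    linarith

theorem stmt_19 :
    ∀ u ∈ Set.Icc (0 : ℝ) 1,
      u ^ 2 / 2 ≤
        ((1 / 2) * (1 - u) * Real.log (1 - u) -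
            (1 - (1 / 2) * u) * Real.log (1 - (1 / 2) * u)) /
          ((1 / 2) * (1 - 1 / 2)) := by
  intro u hu
  obtain ⟨hu0, hu1⟩ := hu
  have hA := ineq_A hu0 hu1
  have hB := core_log_ineq (by linarith : (0:ℝ) ≤ u / 2) (by linarith : u / 2 < 1)
  have hpos : (0 : ℝ) < 1 - u / 2 := by linarith
  have hB' : (1 - u / 2) * Real.log (1 - u / 2) ≤ (1 - u / 2) * (-(u/2) - (u/2) ^ 2 / 2) :=
    mul_le_mul_of_nonneg_left hB (le_of_lt hpos)
  have heq : (1 : ℝ) - (1/2) * u = 1 - u / 2 := by ring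
  rw [heq, le_div_iff₀ (by norm_num : (0:ℝ) < (1/2) * (1 - 1/2))]
  nlinarith [sq_nonneg u, pow_nonneg hu0 3]
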